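/- (Long-Term Survival Probability.) Let b > d ≥ 0, r := b−d > 0, T > 0, and δ ∈ (0,1]. Set p := r/(b·e^{rT} − d), q := d(e^{rT}−1)/(b·e^{rT} − d), and for ε ∈ [0,1] let Q_ε be the 2×2 real matrix [[p−1+ε(1−q), 1−ε(1−q)], [p−1, 1]]. For n ≥ 1 define s_n := 1 − h(Q₁·Q_δ^{n−1}, 0), where h(M,0) = M₀₁/M₁₁. Then the denominators (Q₁·Q_δ^{n−1})₁₁ are nonzero for all n ≥ 1 (so s_n is well defined), and: if δ·e^{rT} ≤ 1 then lim_{n→∞} s_n = 0, while if δ·e^{rT} > 1 then lim_{n→∞} s_n = r(δ − e^{−rT})/(δ·b·(1 − e^{−rT})). -/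

import Mathlib

open Real Filter Matrix

/-- The coefficient matrix `Q_ε` of the linear fractional generating function of the number of
descendants after a bottleneck with survival probability `ε` followed by one growth phase. -/
noncomputable def Qmat (p q ε : ℝ) : Matrix (Fin 2) (Fin 2) ℝ :=
  !![p - 1 + ε * (1 - q), 1 - ε * (1 - q); p - 1, 1]

set_option maxHeartbeats 1000000

noncomputable def Amat (p c : ℝ) : Matrix (Fin 2) (Fin 2) ℝ := !![p - 1 + c, 1 - c; p - 1, 1]

lemma Amat_pow_succ (p c : ℝ) (m : ℕ) :
    ((Amat p c) ^ (m+1)) 0 1 = (p - 1 + c) * ((Amat p c) ^ m) 0 1 + (1 - c) * ((Amat p c) ^ m) 1 1 ∧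
    ((Amat p c) ^ (m+1)) 1 1 = (p - 1) * ((Amat p c) ^ m) 0 1 + ((Amat p c) ^ m) 1 1 := by
  rw [pow_succ']
  constructor <;> simp [Amat, Matrix.mul_apply, Fin.sum_univ_two]

lemma Amat_XY (p c : ℝ) (m : ℕ) :
    (c - p) * ((Amat p c) ^ m) 0 1 = (c ^ m - p ^ m) * (1 - c) ∧
    (c - p) * ((Amat p c) ^ m) 1 1 = c ^ m * (1 - p) - p ^ m * (1 - c) ∧
    ((Amat p c) ^ m) 1 1 - ((Amat p c) ^ m) 0 1 = c ^ m := by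
  induction m with
  | zero => simp [Matrix.one_apply]
  | succ m ih =>
    obtain ⟨h1, h2, h3⟩ := ih
    obtain ⟨e1, e2⟩ := Amat_pow_succ p c m
    rw [e1, e2]
    refine ⟨by linear_combination (p - 1 + c) * h1 + (1 - c) * h2,
      by linear_combination (p - 1) * h1 + h2, by linear_combination c * h3⟩

lemma Amat_XY_deg (p : ℝ) (m : ℕ) :
    ((Amat p p) ^ m) 0 1 * p = m * p ^ m * (1 - p) ∧
    ((Amat p p) ^ m) 1 1 * p = p ^ (m+1) + m * p ^ m * (1 - p) := by
  induction m with
  | zero => simp [Matrix.one_apply]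
  | succ m ih =>
    obtain ⟨h1, h2⟩ := ih
    obtain ⟨e1, e2⟩ := Amat_pow_succ p p m
    rw [e1, e2]
    push_cast
    exact ⟨by linear_combination (p - 1 + p) * h1 + (1 - p) * h2,
      by linear_combination (p - 1) * h1 + h2⟩

lemma Qmat_mul_entry (p q : ℝ) (B : Matrix (Fin 2) (Fin 2) ℝ) :
    (Qmat p q 1 * B) 0 1 = (p - 1 + (1 - q)) * B 0 1 + (1 - (1 - q)) * B 1 1 ∧
    (Qmat p q 1 * B) 1 1 = (p - 1) * B 0 1 + B 1 1 := by
  constructor <;> simp [Qmat, Matrix.mul_apply, Fin.sum_univ_two]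

/-- Long-term survival probability: with `s_n = 1 - h(Q₁·Q_δ^{n-1}, 0)` the survival probability
at the end of the `n`-th cycle, the denominators are nonzero, and `s_n → 0` if `δ·e^{rT} ≤ 1`,
while `s_n → r(δ - e^{-rT})/(δ·b·(1 - e^{-rT}))` if `δ·e^{rT} > 1`. -/
theorem longTerm_survival_probability
    (b d r T δ p q : ℝ)
    (hb : d < b) (hd : 0 ≤ d) (hr : r = b - d) (hT : 0 < T)
    (hδ0 : 0 < δ) (hδ1 : δ ≤ 1)
    (hp : p = r / (b * exp (r * T) - d))
    (hq : q = d * (exp (r * T) - 1) / (b * exp (r * T) - d))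
    (s : ℕ → ℝ)
    (hs : ∀ n : ℕ, 1 ≤ n →
      s n = 1 - (Qmat p q 1 * (Qmat p q δ) ^ (n - 1)) 0 1
              / (Qmat p q 1 * (Qmat p q δ) ^ (n - 1)) 1 1) :
    (∀ n : ℕ, 1 ≤ n → (Qmat p q 1 * (Qmat p q δ) ^ (n - 1)) 1 1 ≠ 0) ∧
    (δ * exp (r * T) ≤ 1 → Tendsto s atTop (nhds 0)) ∧
    (1 < δ * exp (r * T) →
      Tendsto s atTop (nhds (r * (δ - exp (-r * T)) / (δ * b * (1 - exp (-r * T)))))) := by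
  have hr0 : 0 < r := by rw [hr]; linarith
  set E : ℝ := exp (r * T) with hEdef
  have hE1 : 1 < E := one_lt_exp_iff.mpr (by positivity)
  have hb0 : 0 < b := lt_of_le_of_lt hd hb
  have hD : 0 < b * E - d := by nlinarith
  have hp0 : 0 < p := by rw [hp]; positivity
  have hp1 : p < 1 := by rw [hp, div_lt_one hD]; nlinarith
  have hq1 : 1 - q = p * E := by
    rw [hq, hp, div_mul_eq_mul_div, eq_div_iff hD.ne', sub_mul, div_mul_cancel₀ _ hD.ne']
    linear_combination (-E) * hr
  have ha1 : p * E ≤ 1 := by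
    rw [hp, div_mul_eq_mul_div, div_le_one hD]; nlinarith
  obtain ⟨c, hc⟩ : ∃ c, c = δ * (1 - q) := ⟨_, rfl⟩
  have hQA : Qmat p q δ = Amat p c := by rw [hc]; rfl
  have hcE : c = p * (δ * E) := by rw [hc, hq1]; ring
  have hc0 : 0 < c := by rw [hcE]; positivity
  have hc1 : c ≤ 1 := by nlinarith [hcE]
  -- key identity for the (1,1)-entry
  have hM1 : ∀ m : ℕ, (Qmat p q 1 * (Amat p c) ^ m) 1 1
      = (p - 1) * ((Amat p c) ^ m) 0 1 + ((Amat p c) ^ m) 1 1 :=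
    fun m => (Qmat_mul_entry p q _).2
  have hK : ∀ m : ℕ, (c - p) * ((Qmat p q 1 * (Amat p c) ^ m) 1 1)
      = c ^ (m+1) * (1 - p) - p ^ (m+1) * (1 - c) := by
    intro m
    obtain ⟨h1, h2, -⟩ := Amat_XY p c m
    rw [hM1 m]
    linear_combination (p - 1) * h1 + h2
  have hMdeg : c = p → ∀ m : ℕ, (Qmat p q 1 * (Amat p c) ^ m) 1 1
      = p ^ m * (1 + m * (1 - p)) := by
    intro hcp m
    apply mul_right_cancel₀ hp0.ne'
    obtain ⟨h1, h2⟩ := Amat_XY_deg p m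
    rw [hM1 m, hcp]
    linear_combination (p - 1) * h1 + h2
  have hM11pos : ∀ m : ℕ, 0 < (Qmat p q 1 * (Amat p c) ^ m) 1 1 := by
    intro m
    rcases lt_trichotomy c p with h | h | h
    · have hnum : c ^ (m+1) * (1 - p) - p ^ (m+1) * (1 - c) < 0 := by
        have h1 : c ^ (m+1) < p ^ (m+1) := pow_lt_pow_left₀ h hc0.le (Nat.succ_ne_zero m)
        have h2 := mul_lt_mul_of_pos_right h1 (by linarith : (0:ℝ) < 1 - p)
        have h3 := mul_le_mul_of_nonneg_left (by linarith : 1 - p ≤ 1 - c) (pow_pos hp0 (m+1)).le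
        nlinarith
      have := hK m
      nlinarith [this]
    · rw [hMdeg h m]
      have hm : (0:ℝ) ≤ m := Nat.cast_nonneg m
      have h1 := pow_pos hp0 m
      have h2 : (0:ℝ) < 1 + m * (1 - p) := by nlinarith
      exact mul_pos h1 h2
    · have hnum : 0 < c ^ (m+1) * (1 - p) - p ^ (m+1) * (1 - c) := by
        have h1 : p ^ (m+1) < c ^ (m+1) := pow_lt_pow_left₀ h hp0.le (Nat.succ_ne_zero m)
        have h2 := mul_lt_mul_of_pos_right h1 (by linarith : (0:ℝ) < 1 - p)
        have h3 := mul_le_mul_of_nonneg_left (by linarith : 1 - c ≤ 1 - p) (pow_pos hp0 (m+1)).le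
        nlinarith
      have := hK m
      nlinarith [this]
  -- the survival probability closed form
  have hgs : ∀ m : ℕ, s (m+1) = (1 - q) * c ^ m / ((Qmat p q 1 * (Amat p c) ^ m) 1 1) := by
    intro m
    rw [hs (m+1) (by omega)]
    simp only [Nat.add_sub_cancel, hQA]
    obtain ⟨-, -, h3⟩ := Amat_XY p c m
    have e0 := (Qmat_mul_entry p q ((Amat p c) ^ m)).1
    have e1 := hM1 m
    have hne := (hM11pos m).ne'
    rw [e0, e1]
    rw [e1] at hne
    field_simp
    linear_combination ((1:ℝ) - q) * h3
  have hM11ne : ∀ m : ℕ, (Qmat p q 1 * (Amat p c) ^ m) 1 1 ≠ 0 := fun m => (hM11pos m).ne'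
  refine ⟨?_, ?_, ?_⟩
  · intro n hn
    rw [hQA]
    exact hM11ne (n - 1)
  · -- δ E ≤ 1 : extinction
    intro hδE
    have hcp : c ≤ p := by nlinarith [hcE]
    rw [← tendsto_add_atTop_iff_nat 1]
    rcases hcp.lt_or_eq with h | h
    · -- c < p
      have hden : ∀ m : ℕ, c * (1 - p) * (c / p) ^ m - p * (1 - c) < 0 := by
        intro m
        have hx0 : (0:ℝ) ≤ (c / p) ^ m := by positivity
        have hx1 : (c / p) ^ m ≤ 1 :=
          pow_le_one₀ (by positivity) (by rw [div_le_one hp0]; linarith)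
        have h1 : c * (1 - p) * (c / p) ^ m ≤ c * (1 - p) * 1 :=
          mul_le_mul_of_nonneg_left hx1 (by nlinarith)
        nlinarith [h1]
      have hx : ∀ m : ℕ, (c / p) ^ m * p ^ m = c ^ m := by
        intro m
        rw [div_pow, div_mul_cancel₀ _ (pow_pos hp0 m).ne']
      have heq : ∀ m : ℕ, s (m+1)
          = (1 - q) * (c - p) * (c / p) ^ m / (c * (1 - p) * (c / p) ^ m - p * (1 - c)) := by
        intro m
        rw [hgs m, div_eq_div_iff (hM11ne m) (hden m).ne]
        apply mul_right_cancel₀ (pow_pos hp0 m).ne'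
        linear_combination (-(1 - q) * (c / p) ^ m * p ^ m) * hK m
          + ((1 - q) * p ^ (m+1) * (1 - c)) * hx m
      apply Tendsto.congr (fun m => (heq m).symm)
      have hx0 : Tendsto (fun m : ℕ => (c / p) ^ m) atTop (nhds 0) :=
        tendsto_pow_atTop_nhds_zero_of_lt_one (by positivity) (by rw [div_lt_one hp0]; exact h)
      have hlim := Tendsto.div ((tendsto_const_nhds (x := (1 - q) * (c - p))).mul hx0)
        (((tendsto_const_nhds (x := c * (1 - p))).mul hx0).sub
          (tendsto_const_nhds (x := p * (1 - c))))
        (ne_of_lt (by nlinarith) : c * (1 - p) * 0 - p * (1 - c) ≠ 0)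
      simp only [mul_zero, zero_sub, zero_div] at hlim
      exact hlim
    · -- c = p
      have heq : ∀ m : ℕ, s (m+1) = (1 - q) / (1 + m * (1 - p)) := by
        intro m
        rw [hgs m, hMdeg h m, h]
        rw [mul_comm (p ^ m) (1 + (m:ℝ) * (1 - p))]
        rw [mul_div_mul_right _ _ (pow_ne_zero m hp0.ne')]
      apply Tendsto.congr (fun m => (heq m).symm)
      apply Tendsto.div_atTop tendsto_const_nhds
      apply tendsto_atTop_add_const_left
      exact Tendsto.atTop_mul_const (by linarith) tendsto_natCast_atTop_atTop
  · -- 1 < δ E : survival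
    intro hδE
    have hpc : p < c := by nlinarith [hcE]
    rw [← tendsto_add_atTop_iff_nat 1]
    have hden : ∀ m : ℕ, 0 < c * (1 - p) - p * (1 - c) * (p / c) ^ m := by
      intro m
      have hx0 : (0:ℝ) ≤ (p / c) ^ m := by positivity
      have hx1 : (p / c) ^ m ≤ 1 :=
        pow_le_one₀ (by positivity) (by rw [div_le_one hc0]; linarith)
      have h1 : p * (1 - c) * (p / c) ^ m ≤ p * (1 - c) * 1 :=
        mul_le_mul_of_nonneg_left hx1 (by nlinarith)
      nlinarith [h1]
    have hx : ∀ m : ℕ, (p / c) ^ m * c ^ m = p ^ m := by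
      intro m
      rw [div_pow, div_mul_cancel₀ _ (pow_pos hc0 m).ne']
    have heq : ∀ m : ℕ, s (m+1)
        = (1 - q) * (c - p) / (c * (1 - p) - p * (1 - c) * (p / c) ^ m) := by
      intro m
      rw [hgs m, div_eq_div_iff (hM11ne m) (hden m).ne']
      apply mul_right_cancel₀ (pow_pos hc0 m).ne'
      linear_combination (-(1 - q) * c ^ m) * hK m
        - ((1 - q) * p * (1 - c) * c ^ m) * hx m
    apply Tendsto.congr (fun m => (heq m).symm)
    have hx0 : Tendsto (fun m : ℕ => (p / c) ^ m) atTop (nhds 0) :=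
      tendsto_pow_atTop_nhds_zero_of_lt_one (by positivity) (by rw [div_lt_one hc0]; exact hpc)
    have hlim := Tendsto.div (tendsto_const_nhds (x := (1 - q) * (c - p)))
      ((tendsto_const_nhds (x := c * (1 - p))).sub
        (((tendsto_const_nhds (x := p * (1 - c)))).mul hx0))
      (ne_of_gt (by nlinarith) : c * (1 - p) - p * (1 - c) * 0 ≠ 0)
    have hval : (1 - q) * (c - p) / (c * (1 - p) - p * (1 - c) * 0)
        = r * (δ - exp (-r * T)) / (δ * b * (1 - exp (-r * T))) := by
      rw [mul_zero, sub_zero, neg_mul, Real.exp_neg, ← hEdef]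
      have hE0 : (0:ℝ) < E := by linarith
      have h1E : (0:ℝ) < 1 - E⁻¹ := by
        have := inv_lt_one_of_one_lt₀ hE1
        linarith
      rw [hq1, hcE]
      have hkey : p * b * (E - 1) = r * (1 - p) := by
        rw [hp, hr]; field_simp; ring
      have hEE : E * E⁻¹ = 1 := mul_inv_cancel₀ hE0.ne'
      rw [div_eq_div_iff
        (mul_pos (mul_pos hp0 (mul_pos hδ0 hE0)) (by linarith : (0:ℝ) < 1 - p)).ne'
        (mul_pos (mul_pos hδ0 hb0) h1E).ne']
      linear_combination (p * δ * E * (δ - E⁻¹)) * hkey - (p^2 * δ * b * E * (δ - 1)) * hEE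
    rw [← hval]
    exact hlim
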